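/- Let A = [[A_ff, A_fc],[A_cf, A_cc]], P = [[W],[I]], R = [Z, I], and assume K = R·A·P is invertible. Let Δ_F be any F×F matrix, set δ_F = I − Δ_F·A_ff and Ŵ = δ_F·W − Δ_F·A_fc, and let E_F = I − [[Δ_F, 0],[0, 0]]·A be the error-propagation matrix of F-point relaxation. Then E_F·(I − P·K⁻¹·R·A) = I − M⁻¹·A, where M⁻¹ denotes the matrix product [[I, Ŵ],[0, I]] · [[Δ_F, 0],[0, K⁻¹]] · [[I, 0],[Z, I]]. -/

import Mathlib

open Matrix

private lemma two_grid_key {F C : Type*} [Fintype F] [Fintype C] [DecidableEq F] [DecidableEq C]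
    (Aff : Matrix F F ℝ) (Afc : Matrix F C ℝ) (Acf : Matrix C F ℝ) (Acc : Matrix C C ℝ)
    (W : Matrix F C ℝ) (Z : Matrix C F ℝ) (ΔF : Matrix F F ℝ) (K : Matrix C C ℝ) :
    fromBlocks 1 ((1 - ΔF * Aff) * W - ΔF * Afc) 0 1 * fromBlocks ΔF 0 0 K⁻¹ * fromBlocks 1 0 Z 1
      = fromBlocks ΔF 0 0 0 +
        (1 - fromBlocks ΔF 0 0 0 * fromBlocks Aff Afc Acf Acc) *
          (fromRows W 1 * K⁻¹ * fromCols Z 1) := by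
  rw [← fromBlocks_one, fromRows_mul, fromRows_mul_fromCols]
  simp only [fromBlocks_multiply, sub_eq_add_neg, fromBlocks_neg, fromBlocks_add,
    fromBlocks_multiply]
  rw [fromBlocks_inj]
  refine ⟨?_, ?_, ?_, ?_⟩ <;>
    (simp only [Matrix.add_mul, Matrix.neg_mul, Matrix.mul_neg, Matrix.one_mul, Matrix.mul_one,
        Matrix.zero_mul, Matrix.mul_zero, Matrix.mul_assoc, smul_mul_assoc, neg_smul, one_smul,
        neg_zero, zero_add, add_zero]
     all_goals abel)

/-- The two-grid error propagator `E_F·(I − P·K⁻¹·R·A)` with post-F-relaxation can be written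
as `I − M⁻¹·A`, where
`M⁻¹ = [[I, Weff],[0, I]]·[[Δ_F, 0],[0, K⁻¹]]·[[I, 0],[Z, I]]` and
`Weff = (I − Δ_F·A_ff)·W − Δ_F·A_fc`. -/
theorem two_grid_error_prop_eq_one_sub_Minv_mul
    {F C : Type*} [Fintype F] [Fintype C] [DecidableEq F] [DecidableEq C]
    (Aff : Matrix F F ℝ) (Afc : Matrix F C ℝ) (Acf : Matrix C F ℝ) (Acc : Matrix C C ℝ)
    (W : Matrix F C ℝ) (Z : Matrix C F ℝ) (ΔF : Matrix F F ℝ)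
    (A : Matrix (F ⊕ C) (F ⊕ C) ℝ) (hA : A = fromBlocks Aff Afc Acf Acc)
    (P : Matrix (F ⊕ C) C ℝ) (hP : P = fromRows W 1)
    (R : Matrix C (F ⊕ C) ℝ) (hR : R = fromCols Z 1)
    (K : Matrix C C ℝ) (hK : K = R * A * P) (hKinv : IsUnit K)
    (δF : Matrix F F ℝ) (hδF : δF = 1 - ΔF * Aff)
    (Weff : Matrix F C ℝ) (hWeff : Weff = δF * W - ΔF * Afc)
    (EF : Matrix (F ⊕ C) (F ⊕ C) ℝ) (hEF : EF = 1 - fromBlocks ΔF 0 0 0 * A)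
    (Minv : Matrix (F ⊕ C) (F ⊕ C) ℝ)
    (hMinv : Minv = fromBlocks 1 Weff 0 1 * fromBlocks ΔF 0 0 K⁻¹ * fromBlocks 1 0 Z 1) :
    EF * (1 - P * K⁻¹ * R * A) = 1 - Minv * A := by
  subst hδF hWeff hEF hA hP hR hMinv
  rw [two_grid_key]
  noncomm_ring
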